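/- Let q₀ and q₁ be probability density functions on a measure space (S, ν) with squared Hellinger distance h²(q₀,q₁) = 1 − cos α for some α ∈ (0, π/2), and let λ ∈ (0, 1/4). Define q₂ = ((sin((1−λ)α)/sin α)·√q₁ + (sin(λα)/sin α)·√q₀)². Then q₂ is a probability density function, i.e. q₂ ≥ 0 and ∫ q₂ dν = 1. -/

import Mathlib

open MeasureTheory Real

/-- If `h²(q₀,q₁) = 1 - cos α` and `q₂ = ((sin((1-λ)α)/sin α)√q₁ + (sin(λα)/sin α)√q₀)²`,
then `q₂` is a probability density. -/
theorem least_favorable_density_is_density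
    {S : Type*} [MeasurableSpace S] (ν : Measure S)
    (q0 q1 : S → ℝ)
    (h0 : ∀ s, 0 ≤ q0 s) (h1 : ∀ s, 0 ≤ q1 s)
    (hi0 : Integrable q0 ν) (hi1 : Integrable q1 ν)
    (hm0 : ∫ s, q0 s ∂ν = 1) (hm1 : ∫ s, q1 s ∂ν = 1)
    (α l : ℝ) (hα : α ∈ Set.Ioo 0 (π / 2)) (hl : l ∈ Set.Ioo 0 (1 / 4 : ℝ))
    (hHell : (1 / 2) * ∫ s, (Real.sqrt (q0 s) - Real.sqrt (q1 s)) ^ 2 ∂ν = 1 - Real.cos α)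
    (q2 : S → ℝ)
    (hq2 : q2 = fun s =>
      (Real.sin ((1 - l) * α) / Real.sin α * Real.sqrt (q1 s)
        + Real.sin (l * α) / Real.sin α * Real.sqrt (q0 s)) ^ 2) :
    (∀ s, 0 ≤ q2 s) ∧ ∫ s, q2 s ∂ν = 1 := by
  obtain ⟨hα0, hα2⟩ := hα
  have hsin : 0 < Real.sin α := Real.sin_pos_of_pos_of_lt_pi hα0 (by linarith [Real.pi_pos])
  set a := Real.sin ((1 - l) * α) / Real.sin α with ha
  set b := Real.sin (l * α) / Real.sin α with hb
  -- integrability of the cross term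
  have hmeas : AEStronglyMeasurable (fun s => Real.sqrt (q0 s) * Real.sqrt (q1 s)) ν := by
    exact ((Real.continuous_sqrt.measurable.comp_aemeasurable hi0.aemeasurable).mul
      (Real.continuous_sqrt.measurable.comp_aemeasurable hi1.aemeasurable)).aestronglyMeasurable
  have hif : Integrable (fun s => Real.sqrt (q0 s) * Real.sqrt (q1 s)) ν := by
    refine Integrable.mono' (((hi0.add hi1).div_const 2)) hmeas ?_
    filter_upwards with s
    have h0' := Real.sqrt_nonneg (q0 s)
    have h1' := Real.sqrt_nonneg (q1 s)
    have e0 := Real.sq_sqrt (h0 s)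
    have e1 := Real.sq_sqrt (h1 s)
    rw [Real.norm_eq_abs, abs_of_nonneg (mul_nonneg h0' h1')]
    simp only [Pi.add_apply]
    nlinarith [sq_nonneg (Real.sqrt (q0 s) - Real.sqrt (q1 s))]
  -- value of the cross integral
  have hcross : ∫ s, Real.sqrt (q0 s) * Real.sqrt (q1 s) ∂ν = Real.cos α := by
    have hexp : (fun s => (Real.sqrt (q0 s) - Real.sqrt (q1 s)) ^ 2)
        = fun s => q0 s + q1 s - 2 * (Real.sqrt (q0 s) * Real.sqrt (q1 s)) := by
      funext s
      have e0 := Real.sq_sqrt (h0 s)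
      have e1 := Real.sq_sqrt (h1 s)
      ring_nf
      nlinarith
    rw [hexp] at hHell
    have hadd : Integrable (fun s => q0 s + q1 s) ν := hi0.add hi1
    rw [integral_sub hadd (hif.const_mul 2), integral_add hi0 hi1,
      integral_const_mul, hm0, hm1] at hHell
    linarith
  constructor
  · intro s; rw [hq2]; positivity
  · have hexp2 : q2 = fun s => a ^ 2 * q1 s + b ^ 2 * q0 s
        + 2 * a * b * (Real.sqrt (q0 s) * Real.sqrt (q1 s)) := by
      rw [hq2]; funext s
      have e0 := Real.sq_sqrt (h0 s)
      have e1 := Real.sq_sqrt (h1 s)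
      nlinarith [Real.sqrt_nonneg (q0 s), Real.sqrt_nonneg (q1 s)]
    have hA : Integrable (fun s => a ^ 2 * q1 s) ν := hi1.const_mul _
    have hB : Integrable (fun s => b ^ 2 * q0 s) ν := hi0.const_mul _
    have hAB : Integrable (fun s => a ^ 2 * q1 s + b ^ 2 * q0 s) ν := hA.add hB
    rw [hexp2]
    rw [integral_add hAB (hif.const_mul _), integral_add hA hB, integral_const_mul,
      integral_const_mul, integral_const_mul, hm0, hm1, hcross]
    -- trig identity
    have hsum : (1 - l) * α + l * α = α := by ring
    have hc : Real.cos α = Real.cos ((1 - l) * α) * Real.cos (l * α)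
        - Real.sin ((1 - l) * α) * Real.sin (l * α) := by
      rw [← Real.cos_add, hsum]
    have hs : Real.sin α = Real.sin ((1 - l) * α) * Real.cos (l * α)
        + Real.cos ((1 - l) * α) * Real.sin (l * α) := by
      rw [← Real.sin_add, hsum]
    have hp1 := Real.sin_sq_add_cos_sq ((1 - l) * α)
    have hp2 := Real.sin_sq_add_cos_sq (l * α)
    have key : Real.sin ((1 - l) * α) ^ 2 + Real.sin (l * α) ^ 2
        + 2 * Real.sin ((1 - l) * α) * Real.sin (l * α) * Real.cos α = Real.sin α ^ 2 := by
      rw [hc, hs]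
      linear_combination (-Real.sin ((1 - l) * α) ^ 2) * hp2 - Real.sin (l * α) ^ 2 * hp1
    rw [ha, hb]
    field_simp
    linear_combination key
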